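/- Let $\triangle_n$ be the unit simplex in $\mathbb{R}^n$ ($n \ge 2$) and let $s \in \mathbb{R}^n$ be a nonzero vector that is neither a scalar multiple of any standard unit vector $e_j$ nor a scalar multiple of the all-ones vector $\mathbf{1}$. Then $\int_{\triangle_n} e^{-i s \cdot x/\lambda}\,dx = O(\lambda^2)$ as $\lambda \to 0^+$. -/

import Mathlib

open MeasureTheory Set

noncomputable section

def Complex.abs : AbsoluteValue ℂ ℝ := NormedField.toAbsoluteValue ℂ

lemma Complex.norm_eq_abs (z : ℂ) : ‖z‖ = Complex.abs z := rfl

@[simp]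
lemma Complex.abs_I : Complex.abs Complex.I = 1 := Complex.norm_I

@[simp]
lemma Complex.abs_ofReal (r : ℝ) : Complex.abs (r : ℂ) = |r| := by
  rw [← Complex.norm_eq_abs, Complex.norm_real, Real.norm_eq_abs]

lemma Complex.abs_exp (z : ℂ) : Complex.abs (Complex.exp z) = Real.exp z.re := Complex.norm_exp z

/-- oscillatory factor -/
def sfPhase (lam u : ℝ) : ℂ := Complex.exp (-Complex.I * ((u / lam : ℝ) : ℂ))

def sfSet (n : ℕ) (R : ℝ) : Set (Fin n → ℝ) := {x | (∑ i, x i) ≤ R ∧ ∀ i, 0 ≤ x i}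

def sfK (lam : ℝ) (n : ℕ) (s : Fin n → ℝ) (R : ℝ) : ℂ :=
  ∫ x in sfSet n R, sfPhase lam (∑ i, s i * x i)

def sfc (α : ℝ) : ℂ := -Complex.I * (α : ℂ)

lemma sfPhase_abs (lam u : ℝ) : Complex.abs (sfPhase lam u) = 1 := by
  simp [sfPhase, Complex.abs_exp]

lemma sfPhase_add (lam u v : ℝ) : sfPhase lam (u + v) = sfPhase lam u * sfPhase lam v := by
  rw [sfPhase, sfPhase, sfPhase, ← Complex.exp_add]
  congr 1
  push_cast
  ring

lemma sfPhase_eq_exp (lam a y : ℝ) : sfPhase lam (a * y) = Complex.exp (sfc (a / lam) * y) := by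
  rw [sfPhase, sfc]
  congr 1
  push_cast
  ring

lemma sfc_ne {α : ℝ} (hα : α ≠ 0) : sfc α ≠ 0 := by
  simp [sfc, Complex.ext_iff, hα]

lemma sfc_abs (α : ℝ) : Complex.abs (sfc α) = |α| := by
  simp [sfc]

lemma sfc_exp_abs (α R : ℝ) : Complex.abs (Complex.exp (sfc α * R)) = 1 := by
  simp [sfc, Complex.abs_exp]

lemma sfc_exp_sub_one_abs (α R : ℝ) : Complex.abs (Complex.exp (sfc α * R) - 1) ≤ 2 := by
  calc Complex.abs (Complex.exp (sfc α * R) - 1)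
      ≤ Complex.abs (Complex.exp (sfc α * R)) + Complex.abs 1 :=
        AbsoluteValue.sub_le_add _ _ _
    _ ≤ 2 := by rw [sfc_exp_abs]; norm_num

lemma sfSet_measurable (n : ℕ) (R : ℝ) : MeasurableSet (sfSet n R) := by
  have : sfSet n R = {x : Fin n → ℝ | ∑ i, x i ≤ R} ∩ ⋂ i, {x | 0 ≤ x i} := by
    ext x; simp [sfSet, Set.mem_iInter]
  rw [this]
  exact (measurableSet_le (by fun_prop) measurable_const).inter
    (MeasurableSet.iInter fun i => measurableSet_le measurable_const (measurable_pi_apply i))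

lemma sfSet_vol_lt_top {n : ℕ} {R : ℝ} (hR : 0 ≤ R) : volume (sfSet n R) < ⊤ := by
  have hsub : sfSet n R ⊆ Set.pi Set.univ (fun _ : Fin n => Icc 0 R) := by
    intro x hx
    rw [Set.mem_univ_pi]
    intro i
    exact ⟨hx.2 i, le_trans (Finset.single_le_sum (fun j _ => hx.2 j) (Finset.mem_univ i)) hx.1⟩
  refine lt_of_le_of_lt (measure_mono hsub) ?_
  rw [volume_pi_pi]
  exact ENNReal.prod_lt_top fun i _ => by simp [Real.volume_Icc]

lemma sfCont (lam : ℝ) {n : ℕ} (s : Fin n → ℝ) :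
    Continuous fun x : Fin n → ℝ => sfPhase lam (∑ i, s i * x i) := by
  unfold sfPhase
  fun_prop

lemma sfK0 {lam R : ℝ} (hR : 0 ≤ R) (s : Fin 0 → ℝ) : sfK lam 0 s R = 1 := by
  have h1 : sfSet 0 R = Set.univ := by
    refine Set.eq_univ_of_forall fun x => ⟨?_, fun i => i.elim0⟩
    simp [hR]
  have h2 : ∀ x : Fin 0 → ℝ, sfPhase lam (∑ i, s i * x i) = 1 := by
    intro x
    simp [sfPhase]
  rw [sfK, h1]
  simp only [h2]
  rw [setIntegral_const]
  have : (volume : Measure (Fin 0 → ℝ)) Set.univ = 1 := by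
    rw [show (Set.univ : Set (Fin 0 → ℝ)) = Set.pi Set.univ (fun _ : Fin 0 => Set.univ) by simp]
    rw [volume_pi_pi]
    simp
  rw [measureReal_def, this]
  simp

lemma sfPeel (lam : ℝ) {n : ℕ} (s : Fin (n + 1) → ℝ) (j : Fin (n + 1)) {R : ℝ} (hR : 0 ≤ R) :
    sfK lam (n + 1) s R
      = ∫ y in Icc (0:ℝ) R, sfPhase lam (s j * y) * sfK lam n (s ∘ j.succAbove) (R - y) := by
  classical
  set e := MeasurableEquiv.piFinSuccAbove (fun _ : Fin (n + 1) => ℝ) j with he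
  have hmp : MeasurePreserving e.symm :=
    (volume_preserving_piFinSuccAbove (fun _ : Fin (n + 1) => ℝ) j).symm
  set T : Set (ℝ × (Fin n → ℝ)) :=
    {p | (0 ≤ p.1 ∧ ∀ i, 0 ≤ p.2 i) ∧ p.1 + ∑ i, p.2 i ≤ R} with hTdef
  set G : ℝ × (Fin n → ℝ) → ℂ :=
    fun p => sfPhase lam (s j * p.1) * sfPhase lam (∑ i, s (j.succAbove i) * p.2 i) with hGdef
  have hesymm : ∀ p : ℝ × (Fin n → ℝ), e.symm p = j.insertNth p.1 p.2 := by
    intro p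
    rw [MeasurableEquiv.piFinSuccAbove_symm_apply]
    rfl
  have hset : e.symm ⁻¹' (sfSet (n + 1) R) = T := by
    ext ⟨y, z⟩
    simp only [Set.mem_preimage, hesymm, sfSet, Set.mem_setOf_eq, hTdef,
      Fin.sum_univ_succAbove (fun i => j.insertNth y z i) j,
      Fin.forall_iff_succAbove j, Fin.insertNth_apply_same, Fin.insertNth_apply_succAbove]
    tauto
  have hfun : ∀ p : ℝ × (Fin n → ℝ),
      sfPhase lam (∑ i, s i * (e.symm p) i) = G p := by
    intro p
    have hsum : (∑ i, s i * (j.insertNth p.1 p.2 : Fin (n + 1) → ℝ) i)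
        = s j * p.1 + ∑ i, s (j.succAbove i) * p.2 i := by
      rw [Fin.sum_univ_succAbove (fun i => s i * (j.insertNth p.1 p.2 : Fin (n + 1) → ℝ) i) j]
      simp
    rw [hesymm, hsum, sfPhase_add]
  have hT : MeasurableSet T := by
    rw [← hset]
    exact e.symm.measurable (sfSet_measurable _ _)
  have hTvol : (volume : Measure (ℝ × (Fin n → ℝ))) T < ⊤ := by
    rw [← hset]
    rw [hmp.measure_preimage (sfSet_measurable _ _).nullMeasurableSet]
    exact sfSet_vol_lt_top hR
  have hGcont : Continuous G := by
    unfold G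
    unfold sfPhase
    fun_prop
  have hint : Integrable (T.indicator G) (volume : Measure (ℝ × (Fin n → ℝ))) := by
    rw [integrable_indicator_iff hT]
    refine Measure.integrableOn_of_bounded hTvol.ne hGcont.aestronglyMeasurable
      (M := 1) (ae_of_all _ fun p => ?_)
    rw [hGdef]
    simp only [norm_mul, Complex.norm_eq_abs, sfPhase_abs, mul_one, le_refl]
  calc sfK lam (n + 1) s R
      = ∫ p in e.symm ⁻¹' (sfSet (n + 1) R), sfPhase lam (∑ i, s i * (e.symm p) i) :=
        (hmp.setIntegral_preimage_emb e.symm.measurableEmbedding _ _).symm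
    _ = ∫ p in T, G p := by rw [hset]; exact setIntegral_congr_fun hT fun p _ => hfun p
    _ = ∫ p, T.indicator G p := (integral_indicator hT).symm
    _ = ∫ y : ℝ, ∫ z : Fin n → ℝ, T.indicator G (y, z) := by
        have := MeasureTheory.integral_prod (μ := (volume : Measure ℝ))
          (ν := (volume : Measure (Fin n → ℝ))) (T.indicator G) (by exact hint)
        exact this
    _ = ∫ y : ℝ, (Icc (0:ℝ) R).indicator
          (fun y => sfPhase lam (s j * y) * sfK lam n (s ∘ j.succAbove) (R - y)) y := by
        refine integral_congr_ae (ae_of_all _ fun y => ?_)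
        dsimp only
        by_cases hy : y ∈ Icc (0:ℝ) R
        · have hsec : (fun z => T.indicator G (y, z))
              = (sfSet n (R - y)).indicator (fun z => G (y, z)) := by
            funext z
            by_cases hz : z ∈ sfSet n (R - y)
            · rw [Set.indicator_of_mem hz, Set.indicator_of_mem]
              exact ⟨⟨hy.1, hz.2⟩, by have := hz.1; simp only [] at this ⊢; linarith⟩
            · rw [Set.indicator_of_notMem hz, Set.indicator_of_notMem]
              intro hmem
              exact hz ⟨by have := hmem.2; linarith, hmem.1.2⟩
          rw [hsec, Set.indicator_of_mem hy, integral_indicator (sfSet_measurable _ _)]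
          rw [hGdef]
          simp only []
          rw [MeasureTheory.integral_const_mul]
          rfl
        · have hzero : (fun z => T.indicator G (y, z)) = fun _ => 0 := by
            funext z
            refine Set.indicator_of_notMem (fun hmem => hy ⟨hmem.1.1, ?_⟩) _
            have h0 : 0 ≤ ∑ i, z i := Finset.sum_nonneg fun i _ => hmem.1.2 i
            have := hmem.2
            linarith
          rw [hzero, Set.indicator_of_notMem hy, integral_zero]
    _ = ∫ y in Icc (0:ℝ) R, sfPhase lam (s j * y) * sfK lam n (s ∘ j.succAbove) (R - y) :=
        integral_indicator measurableSet_Icc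

/-- Propagation: a uniform bound on the peeled kernel propagates upward. -/
lemma sfProp (lam : ℝ) {n : ℕ} (s : Fin (n + 1) → ℝ) (j : Fin (n + 1)) {B : ℝ}
    (hB : 0 ≤ B)
    (h : ∀ R : ℝ, 0 ≤ R → R ≤ 1 → Complex.abs (sfK lam n (s ∘ j.succAbove) R) ≤ B) :
    ∀ R : ℝ, 0 ≤ R → R ≤ 1 → Complex.abs (sfK lam (n + 1) s R) ≤ B := by
  intro R hR0 hR1
  rw [sfPeel lam s j hR0]
  rw [← Complex.norm_eq_abs]
  calc ‖∫ y in Icc (0:ℝ) R, sfPhase lam (s j * y) * sfK lam n (s ∘ j.succAbove) (R - y)‖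
      ≤ B * ((volume (Icc (0:ℝ) R)).toReal) := by
        refine norm_setIntegral_le_of_norm_le_const (by simp [Real.volume_Icc])
          fun y hy => ?_
        rw [norm_mul, Complex.norm_eq_abs, Complex.norm_eq_abs, sfPhase_abs, one_mul]
        exact h (R - y) (by linarith [hy.2]) (by linarith [hy.1])
    _ ≤ B := by
        rw [Real.volume_Icc, ENNReal.toReal_ofReal (by linarith)]
        nlinarith

lemma sfK1 {lam R : ℝ} (hR : 0 ≤ R) (s : Fin 1 → ℝ) :
    sfK lam 1 s R = ∫ y in (0:ℝ)..R, Complex.exp (sfc (s 0 / lam) * y) := by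
  rw [sfPeel lam s 0 hR]
  have h0 : EqOn (fun y => sfPhase lam (s 0 * y) * sfK lam 0 (s ∘ Fin.succAbove 0) (R - y))
      (fun y => Complex.exp (sfc (s 0 / lam) * y)) (Icc (0:ℝ) R) := by
    intro y hy
    simp only []
    rw [sfK0 (by linarith [hy.1, hy.2]) _, mul_one, sfPhase_eq_exp]
  rw [setIntegral_congr_fun measurableSet_Icc h0, integral_Icc_eq_integral_Ioc,
    ← intervalIntegral.integral_of_le hR]

lemma sfJ0 {α : ℝ} (hα : α ≠ 0) (R : ℝ) :
    ∫ y in (0:ℝ)..R, Complex.exp (sfc α * y)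
      = (Complex.exp (sfc α * R) - 1) / sfc α := by
  rw [integral_exp_mul_complex (sfc_ne hα)]
  norm_num

lemma sfJ0_abs {α : ℝ} (hα : α ≠ 0) (R : ℝ) :
    Complex.abs (∫ y in (0:ℝ)..R, Complex.exp (sfc α * y)) ≤ 2 / |α| := by
  rw [sfJ0 hα, map_div₀, sfc_abs]
  have h2 := sfc_exp_sub_one_abs α R
  have hpos : 0 < |α| := abs_pos.mpr hα
  gcongr

lemma sfExp_hasDerivAt (c : ℂ) (y : ℝ) :
    HasDerivAt (fun y : ℝ => Complex.exp (c * y)) (c * Complex.exp (c * y)) y := by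
  have h1 : HasDerivAt (fun z : ℂ => Complex.exp (c * z)) (c * Complex.exp (c * y)) (y : ℂ) := by
    have := (Complex.hasDerivAt_exp (c * (y : ℂ))).comp (y : ℂ)
      ((hasDerivAt_id (y : ℂ)).const_mul c)
    simpa [mul_comm, Function.comp_def] using this
  exact h1.comp_ofReal

lemma sfOfReal_hasDerivAt (y : ℝ) : HasDerivAt (fun y : ℝ => (y : ℂ)) 1 y := by
  simpa using (hasDerivAt_id y).ofReal_comp

lemma sfJ1 {α : ℝ} (hα : α ≠ 0) (R : ℝ) :
    ∫ y in (0:ℝ)..R, ((R - y : ℝ) : ℂ) * Complex.exp (sfc α * y)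
      = (Complex.exp (sfc α * R) - 1) / (sfc α) ^ 2 - (R : ℂ) / sfc α := by
  have hc := sfc_ne hα
  set c := sfc α
  have hderiv : ∀ y ∈ uIcc (0:ℝ) R,
      HasDerivAt (fun y : ℝ => Complex.exp (c * y) * (((R : ℂ) - y) / c + 1 / c ^ 2))
        (((R - y : ℝ) : ℂ) * Complex.exp (c * y)) y := by
    intro y _
    have h1 := sfExp_hasDerivAt c y
    have h2 : HasDerivAt (fun y : ℝ => ((R : ℂ) - y) / c + 1 / c ^ 2) (-(1 / c)) y := by
      have h3 : HasDerivAt (fun y : ℝ => (R : ℂ) - y) (-1) y := by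
        simpa [Pi.sub_def] using (hasDerivAt_const y (R : ℂ)).sub (sfOfReal_hasDerivAt y)
      have := (h3.div_const c).add_const (1 / c ^ 2)
      refine this.congr_deriv ?_
      ring
    have := h1.mul h2
    refine this.congr_deriv ?_
    push_cast
    field_simp
    ring
  have hint : IntervalIntegrable (fun y : ℝ => ((R - y : ℝ) : ℂ) * Complex.exp (c * y))
      volume 0 R := by
    apply Continuous.intervalIntegrable
    fun_prop
  rw [intervalIntegral.integral_eq_sub_of_hasDerivAt hderiv hint]
  push_cast
  field_simp
  simp only [mul_zero, Complex.exp_zero]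
  ring

lemma sfJ1_abs {α : ℝ} (hα : α ≠ 0) {R : ℝ} (hR0 : 0 ≤ R) :
    Complex.abs (∫ y in (0:ℝ)..R, ((R - y : ℝ) : ℂ) * Complex.exp (sfc α * y))
      ≤ 2 / α ^ 2 + R / |α| := by
  rw [sfJ1 hα]
  have h1 : Complex.abs ((Complex.exp (sfc α * R) - 1) / (sfc α) ^ 2) ≤ 2 / α ^ 2 := by
    rw [map_div₀, map_pow, sfc_abs, sq_abs]
    have hp : (0:ℝ) < α ^ 2 := by positivity
    gcongr
    exact sfc_exp_sub_one_abs α R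
  have h2 : Complex.abs ((R : ℂ) / sfc α) = R / |α| := by
    rw [map_div₀, sfc_abs, Complex.abs_ofReal, abs_of_nonneg hR0]
  calc Complex.abs ((Complex.exp (sfc α * R) - 1) / (sfc α) ^ 2 - (R : ℂ) / sfc α)
      ≤ Complex.abs ((Complex.exp (sfc α * R) - 1) / (sfc α) ^ 2)
        + Complex.abs ((R : ℂ) / sfc α) := AbsoluteValue.sub_le_add _ _ _
    _ ≤ 2 / α ^ 2 + R / |α| := by rw [h2]; gcongr

lemma sfc_sub (u v : ℝ) : sfc (u - v) = sfc u - sfc v := by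
  unfold sfc; push_cast; ring

lemma sfPeel' (lam : ℝ) {n : ℕ} (s : Fin (n + 1) → ℝ) {R : ℝ} (hR0 : 0 ≤ R) :
    sfK lam (n + 1) s R = ∫ y in (0:ℝ)..R,
      Complex.exp (sfc (s 0 / lam) * y) * sfK lam n (s ∘ Fin.succAbove 0) (R - y) := by
  rw [sfPeel lam s 0 hR0]
  simp only [sfPhase_eq_exp]
  rw [integral_Icc_eq_integral_Ioc, ← intervalIntegral.integral_of_le hR0]

lemma sfTail2 (s : Fin 2 → ℝ) : (s ∘ Fin.succAbove 0) 0 = s 1 := rfl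

lemma sfBaseA {lam : ℝ} (hlam : 0 < lam) {a b : ℝ} (ha : a ≠ 0) (hb : b ≠ 0) (hab : a ≠ b)
    (s : Fin 2 → ℝ) (hs0 : s 0 = a) (hs1 : s 1 = b) {R : ℝ} (hR0 : 0 ≤ R) (hR1 : R ≤ 1) :
    Complex.abs (sfK lam 2 s R) ≤ (2 / (|b| * |a - b|) + 2 / (|b| * |a|)) * lam ^ 2 := by
  have hlam' : lam ≠ 0 := ne_of_gt hlam
  have hα : a / lam ≠ 0 := div_ne_zero ha hlam'
  have hβ : b / lam ≠ 0 := div_ne_zero hb hlam'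
  have hγ : (a - b) / lam ≠ 0 := div_ne_zero (sub_ne_zero.mpr hab) hlam'
  set cα := sfc (a / lam) with hcα
  set cβ := sfc (b / lam) with hcβ
  set cγ := sfc ((a - b) / lam) with hcγ
  have hcβne : cβ ≠ 0 := sfc_ne hβ
  have hγeq : cγ = cα - cβ := by rw [hcγ, hcα, hcβ, ← sfc_sub]; congr 1; ring
  have step1 : sfK lam 2 s R = ∫ y in (0:ℝ)..R,
      ((Complex.exp (cβ * R) / cβ) * Complex.exp (cγ * y) - (1 / cβ) * Complex.exp (cα * y)) := by
    rw [sfPeel' lam s hR0, hs0]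
    refine intervalIntegral.integral_congr fun y hy => ?_
    rw [uIcc_of_le hR0] at hy
    have hRy : (0:ℝ) ≤ R - y := by linarith [hy.2]
    rw [sfK1 hRy, sfJ0 (by rw [sfTail2, hs1]; exact hβ), sfTail2, hs1]
    have e1 : Complex.exp (cβ * ((R - y : ℝ) : ℂ)) = Complex.exp (cβ * R) * Complex.exp (-(cβ * y)) := by
      rw [← Complex.exp_add]; congr 1; push_cast; ring
    have e2 : Complex.exp (cγ * y) = Complex.exp (cα * y) * Complex.exp (-(cβ * y)) := by
      rw [← Complex.exp_add, hγeq]; congr 1; ring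
    rw [e1, e2]
    simp only [← hcα, ← hcβ]
    field_simp
  have hint1 : IntervalIntegrable (fun y : ℝ => (Complex.exp (cβ * R) / cβ) * Complex.exp (cγ * y))
      volume 0 R := by apply Continuous.intervalIntegrable; fun_prop
  have hint2 : IntervalIntegrable (fun y : ℝ => (1 / cβ) * Complex.exp (cα * y))
      volume 0 R := by apply Continuous.intervalIntegrable; fun_prop
  rw [step1, intervalIntegral.integral_sub hint1 hint2,
    intervalIntegral.integral_const_mul, intervalIntegral.integral_const_mul]
  have habs : ∀ u : ℝ, u ≠ 0 → Complex.abs (∫ y in (0:ℝ)..R, Complex.exp (sfc (u / lam) * y))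
      ≤ 2 * lam / |u| := by
    intro u hu
    refine le_trans (sfJ0_abs (div_ne_zero hu hlam') R) (le_of_eq ?_)
    rw [abs_div, abs_of_pos hlam]
    have hu' : |u| ≠ 0 := abs_ne_zero.mpr hu
    field_simp
  have h1 : Complex.abs (Complex.exp (cβ * R) / cβ) = lam / |b| := by
    rw [map_div₀, sfc_exp_abs, hcβ, sfc_abs, abs_div, abs_of_pos hlam, one_div_div]
  have h2 : Complex.abs ((1:ℂ) / cβ) = lam / |b| := by
    rw [map_div₀, map_one, hcβ, sfc_abs, abs_div, abs_of_pos hlam, one_div_div]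
  set X := ∫ y in (0:ℝ)..R, Complex.exp (cγ * y) with hX
  set Y := ∫ y in (0:ℝ)..R, Complex.exp (cα * y) with hY
  calc Complex.abs (Complex.exp (cβ * R) / cβ * X - 1 / cβ * Y)
      ≤ Complex.abs (Complex.exp (cβ * R) / cβ) * Complex.abs X
        + Complex.abs ((1:ℂ) / cβ) * Complex.abs Y := by
        refine le_trans (AbsoluteValue.sub_le_add _ _ _) ?_
        rw [map_mul, map_mul]
    _ ≤ (lam / |b|) * (2 * lam / |a - b|) + (lam / |b|) * (2 * lam / |a|) := by
        rw [h1, h2]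
        have g1 := habs (a - b) (sub_ne_zero.mpr hab)
        have g2 := habs a ha
        rw [← hcγ] at g1
        rw [← hcα] at g2
        rw [← hX] at g1
        rw [← hY] at g2
        gcongr <;> positivity
    _ = (2 / (|b| * |a - b|) + 2 / (|b| * |a|)) * lam ^ 2 := by
        field_simp

lemma sfK1_zero {lam R : ℝ} (hR : 0 ≤ R) (s : Fin 1 → ℝ) (h0 : s 0 = 0) :
    sfK lam 1 s R = (R : ℂ) := by
  rw [sfK1 hR, h0]
  simp [sfc]

lemma sfK2_mix {lam : ℝ} (hlam : 0 < lam) {a : ℝ} (ha : a ≠ 0)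
    (s : Fin 2 → ℝ) (hmix : (s 0 = a ∧ s 1 = 0) ∨ (s 0 = 0 ∧ s 1 = a))
    {R : ℝ} (hR0 : 0 ≤ R) :
    sfK lam 2 s R = (Complex.exp (sfc (a / lam) * R) - 1) / (sfc (a / lam)) ^ 2
      - (R : ℂ) / sfc (a / lam) := by
  have hlam' : lam ≠ 0 := ne_of_gt hlam
  have hα : a / lam ≠ 0 := div_ne_zero ha hlam'
  set cα := sfc (a / lam) with hcα
  have hcne : cα ≠ 0 := sfc_ne hα
  rcases hmix with ⟨h0, h1⟩ | ⟨h0, h1⟩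
  · rw [sfPeel' lam s hR0, h0, ← sfJ1 hα]
    refine intervalIntegral.integral_congr fun y hy => ?_
    rw [uIcc_of_le hR0] at hy
    have hRy : (0:ℝ) ≤ R - y := by linarith [hy.2]
    rw [sfK1_zero hRy _ (by rw [sfTail2]; exact h1)]
    ring
  · have hmα : -a / lam ≠ 0 := div_ne_zero (neg_ne_zero.mpr ha) hlam'
    have hneg : sfc (-a / lam) = -cα := by
      rw [hcα, show -a / lam = -(a / lam) by ring]
      unfold sfc; push_cast; ring
    have step1 : sfK lam 2 s R = ∫ y in (0:ℝ)..R,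
        ((Complex.exp (cα * R) / cα) * Complex.exp (sfc (-a / lam) * y) - 1 / cα) := by
      rw [sfPeel' lam s hR0, h0]
      refine intervalIntegral.integral_congr fun y hy => ?_
      rw [uIcc_of_le hR0] at hy
      have hRy : (0:ℝ) ≤ R - y := by linarith [hy.2]
      rw [sfK1 hRy, sfJ0 (by rw [sfTail2, h1]; exact hα), sfTail2, h1]
      have e0 : sfc (0 / lam) = 0 := by unfold sfc; norm_num
      have e1 : Complex.exp (cα * ((R - y : ℝ) : ℂ))
          = Complex.exp (cα * R) * Complex.exp (sfc (-a / lam) * y) := by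
        rw [← Complex.exp_add, hneg]; congr 1; push_cast; ring
      rw [e0, e1]
      simp only [← hcα, zero_mul, Complex.exp_zero, one_mul]
      field_simp
    have hint1 : IntervalIntegrable
        (fun y : ℝ => (Complex.exp (cα * R) / cα) * Complex.exp (sfc (-a / lam) * y))
        volume 0 R := by apply Continuous.intervalIntegrable; fun_prop
    have hint2 : IntervalIntegrable (fun _ : ℝ => (1 : ℂ) / cα) volume 0 R :=
      intervalIntegrable_const
    rw [step1, intervalIntegral.integral_sub hint1 hint2,
      intervalIntegral.integral_const_mul, sfJ0 hmα, intervalIntegral.integral_const, hneg]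
    simp only [sub_zero, Complex.real_smul]
    field_simp
    have hp1 : Complex.exp (cα * (R:ℂ)) * Complex.exp (-(cα * (R:ℂ))) = 1 := by
      rw [← Complex.exp_add, show cα * (R:ℂ) + -(cα * (R:ℂ)) = 0 by ring, Complex.exp_zero]
    have hp2 : Complex.exp (cα * (R:ℂ)) * Complex.exp (-cα * (R:ℂ)) = 1 := by
      rw [← Complex.exp_add, show cα * (R:ℂ) + -cα * (R:ℂ) = 0 by ring, Complex.exp_zero]
    linear_combination -1 * hp1

lemma sfK2_aa {lam : ℝ} (hlam : 0 < lam) {a : ℝ} (ha : a ≠ 0)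
    (s : Fin 2 → ℝ) (h0 : s 0 = a) (h1 : s 1 = a) {R : ℝ} (hR0 : 0 ≤ R) :
    sfK lam 2 s R = (R : ℂ) * Complex.exp (sfc (a / lam) * R) / sfc (a / lam)
      - (Complex.exp (sfc (a / lam) * R) - 1) / (sfc (a / lam)) ^ 2 := by
  have hlam' : lam ≠ 0 := ne_of_gt hlam
  have hα : a / lam ≠ 0 := div_ne_zero ha hlam'
  set cα := sfc (a / lam) with hcα
  have hcne : cα ≠ 0 := sfc_ne hα
  have step1 : sfK lam 2 s R = ∫ y in (0:ℝ)..R,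
      ((1 / cα) * Complex.exp (cα * R) - (1 / cα) * Complex.exp (cα * y)) := by
    rw [sfPeel' lam s hR0, h0]
    refine intervalIntegral.integral_congr fun y hy => ?_
    rw [uIcc_of_le hR0] at hy
    have hRy : (0:ℝ) ≤ R - y := by linarith [hy.2]
    rw [sfK1 hRy, sfJ0 (by rw [sfTail2, h1]; exact hα), sfTail2, h1, ← hcα]
    push_cast
    field_simp
    have e1 : Complex.exp (cα * (y:ℂ)) * Complex.exp (cα * ((R:ℂ) - (y:ℂ)))
        = Complex.exp (cα * (R:ℂ)) := by
      rw [← Complex.exp_add]; congr 1; ring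
    linear_combination e1
  have hint1 : IntervalIntegrable (fun _ : ℝ => (1 / cα) * Complex.exp (cα * R)) volume 0 R :=
    intervalIntegrable_const
  have hint2 : IntervalIntegrable (fun y : ℝ => (1 / cα) * Complex.exp (cα * y)) volume 0 R := by
    apply Continuous.intervalIntegrable; fun_prop
  rw [step1, intervalIntegral.integral_sub hint1 hint2, intervalIntegral.integral_const,
    intervalIntegral.integral_const_mul, sfJ0 hα]
  simp only [← hcα, sub_zero, Complex.real_smul]
  field_simp

lemma sfTail3a (s : Fin 3 → ℝ) : (s ∘ Fin.succAbove 0) 0 = s 1 := rfl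
lemma sfTail3b (s : Fin 3 → ℝ) : (s ∘ Fin.succAbove 0) 1 = s 2 := rfl

lemma sfQbounds {lam a : ℝ} (hlam : 0 < lam) (ha : a ≠ 0) :
    Complex.abs (sfc (a / lam)) = |a| / lam := by
  rw [sfc_abs, abs_div, abs_of_pos hlam]

lemma sfK3_a_mix {lam a : ℝ} (hlam : 0 < lam) (ha : a ≠ 0) (hlam2 : lam ≤ |a|)
    (s : Fin 3 → ℝ) (h0 : s 0 = a)
    (hmix : ((s ∘ Fin.succAbove 0) 0 = a ∧ (s ∘ Fin.succAbove 0) 1 = 0)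
      ∨ ((s ∘ Fin.succAbove 0) 0 = 0 ∧ (s ∘ Fin.succAbove 0) 1 = a))
    {R : ℝ} (hR0 : 0 ≤ R) (hR1 : R ≤ 1) :
    Complex.abs (sfK lam 3 s R) ≤ (6 / a ^ 2) * lam ^ 2 := by
  have hlam' : lam ≠ 0 := ne_of_gt hlam
  have hα : a / lam ≠ 0 := div_ne_zero ha hlam'
  set cα := sfc (a / lam) with hcα
  have hcne : cα ≠ 0 := sfc_ne hα
  have step1 : sfK lam 3 s R = ∫ y in (0:ℝ)..R,
      ((Complex.exp (cα * R) / cα ^ 2) - (1 / cα ^ 2) * Complex.exp (cα * y)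
        - (1 / cα) * (((R - y : ℝ) : ℂ) * Complex.exp (cα * y))) := by
    rw [sfPeel' lam s hR0, h0]
    refine intervalIntegral.integral_congr fun y hy => ?_
    rw [uIcc_of_le hR0] at hy
    have hRy : (0:ℝ) ≤ R - y := by linarith [hy.2]
    rw [sfK2_mix hlam ha _ hmix hRy, ← hcα]
    have e1 : Complex.exp (cα * (y:ℂ)) * Complex.exp (cα * ((R:ℂ) - (y:ℂ)))
        = Complex.exp (cα * (R:ℂ)) := by
      rw [← Complex.exp_add]; congr 1; ring
    push_cast
    field_simp
    linear_combination e1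
  have hint1 : IntervalIntegrable (fun _ : ℝ => Complex.exp (cα * R) / cα ^ 2) volume 0 R :=
    intervalIntegrable_const
  have hint2 : IntervalIntegrable (fun y : ℝ => (1 / cα ^ 2) * Complex.exp (cα * y)) volume 0 R := by
    apply Continuous.intervalIntegrable; fun_prop
  have hint3 : IntervalIntegrable
      (fun y : ℝ => (1 / cα) * (((R - y : ℝ) : ℂ) * Complex.exp (cα * y))) volume 0 R := by
    apply Continuous.intervalIntegrable
    apply Continuous.mul continuous_const
    fun_prop
  rw [step1, intervalIntegral.integral_sub (hint1.sub hint2) hint3,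
    intervalIntegral.integral_sub hint1 hint2, intervalIntegral.integral_const,
    intervalIntegral.integral_const_mul, intervalIntegral.integral_const_mul]
  set q := lam / |a| with hq
  have hqpos : 0 < q := div_pos hlam (abs_pos.mpr ha)
  have hq1 : q ≤ 1 := (div_le_one (abs_pos.mpr ha)).mpr hlam2
  have habs1 : Complex.abs (Complex.exp (cα * R) / cα ^ 2) = q ^ 2 := by
    rw [map_div₀, sfc_exp_abs, map_pow, sfQbounds hlam ha, hq]
    rw [one_div, div_pow, ← one_div]
    field_simp
  have habs2 : Complex.abs ((1:ℂ) / cα ^ 2) = q ^ 2 := by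
    rw [map_div₀, map_one, map_pow, sfQbounds hlam ha, hq, div_pow, one_div, ← one_div]
    field_simp
  have habs3 : Complex.abs ((1:ℂ) / cα) = q := by
    rw [map_div₀, map_one, sfQbounds hlam ha, hq, one_div_div]
  have hJ0 : Complex.abs (∫ y in (0:ℝ)..R, Complex.exp (cα * y)) ≤ 2 * q := by
    refine le_trans (sfJ0_abs hα R) ?_
    rw [abs_div, abs_of_pos hlam, hq]
    rw [div_div_eq_mul_div, mul_div_assoc]
  have hJ1 : Complex.abs (∫ y in (0:ℝ)..R, ((R - y : ℝ) : ℂ) * Complex.exp (cα * y))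
      ≤ 2 * q ^ 2 + R * q := by
    refine le_trans (sfJ1_abs hα hR0) ?_
    have e2 : 2 / (a / lam) ^ 2 = 2 * q ^ 2 := by
      rw [hq, div_pow, div_pow, sq_abs, div_div_eq_mul_div, mul_div_assoc]
    have e3 : R / |a / lam| = R * q := by
      rw [abs_div, abs_of_pos hlam, hq, div_div_eq_mul_div, mul_div_assoc]
    rw [e2, e3]
  set X := ∫ y in (0:ℝ)..R, Complex.exp (cα * y) with hX
  set Y := ∫ y in (0:ℝ)..R, ((R - y : ℝ) : ℂ) * Complex.exp (cα * y) with hY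
  calc Complex.abs ((R - 0) • (Complex.exp (cα * R) / cα ^ 2)
          - (1 / cα ^ 2) * X - (1 / cα) * Y)
      ≤ Complex.abs ((R - 0) • (Complex.exp (cα * R) / cα ^ 2))
          + Complex.abs ((1 / cα ^ 2) * X)
          + Complex.abs ((1 / cα) * Y) := by
        refine le_trans (AbsoluteValue.sub_le_add _ _ _) ?_
        gcongr
        exact AbsoluteValue.sub_le_add _ _ _
    _ ≤ R * q ^ 2 + q ^ 2 * (2 * q) + q * (2 * q ^ 2 + R * q) := by
        rw [map_mul, map_mul, habs2, habs3]
        have h4 : Complex.abs ((R - 0) • (Complex.exp (cα * R) / cα ^ 2)) = R * q ^ 2 := by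
          rw [sub_zero, Complex.real_smul, map_mul, Complex.abs_ofReal, abs_of_nonneg hR0, habs1]
        rw [h4]
        gcongr
    _ ≤ 6 * q ^ 2 := by nlinarith
    _ = (6 / a ^ 2) * lam ^ 2 := by
        rw [hq, div_pow, sq_abs]
        field_simp

lemma sfK3_0_aa {lam a : ℝ} (hlam : 0 < lam) (ha : a ≠ 0) (hlam2 : lam ≤ |a|)
    (s : Fin 3 → ℝ) (h0 : s 0 = 0) (h1 : s 1 = a) (h2 : s 2 = a)
    {R : ℝ} (hR0 : 0 ≤ R) (hR1 : R ≤ 1) :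
    Complex.abs (sfK lam 3 s R) ≤ (6 / a ^ 2) * lam ^ 2 := by
  have hlam' : lam ≠ 0 := ne_of_gt hlam
  have hα : a / lam ≠ 0 := div_ne_zero ha hlam'
  have hα' : -a / lam ≠ 0 := div_ne_zero (neg_ne_zero.mpr ha) hlam'
  set cα := sfc (a / lam) with hcα
  set cδ := sfc (-a / lam) with hcδ
  have hcne : cα ≠ 0 := sfc_ne hα
  have hneg : cδ = -cα := by
    rw [hcδ, hcα, show -a / lam = -(a / lam) by ring]
    unfold sfc; push_cast; ring
  have step1 : sfK lam 3 s R = ∫ y in (0:ℝ)..R,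
      ((Complex.exp (cα * R) / cα) * (((R - y : ℝ) : ℂ) * Complex.exp (cδ * y))
        - (Complex.exp (cα * R) / cα ^ 2) * Complex.exp (cδ * y) + 1 / cα ^ 2) := by
    rw [sfPeel' lam s hR0, h0]
    refine intervalIntegral.integral_congr fun y hy => ?_
    rw [uIcc_of_le hR0] at hy
    have hRy : (0:ℝ) ≤ R - y := by linarith [hy.2]
    rw [sfK2_aa hlam ha _ (by rw [sfTail3a, h1]) (by rw [sfTail3b, h2]) hRy, ← hcα]
    have e0 : sfc (0 / lam) = 0 := by unfold sfc; norm_num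
    have e1 : Complex.exp (cα * ((R:ℂ) - (y:ℂ))) = Complex.exp (cα * R) * Complex.exp (cδ * y) := by
      rw [← Complex.exp_add, hneg]; congr 1; ring
    rw [e0]
    push_cast
    rw [e1]
    simp only [zero_mul, Complex.exp_zero, one_mul]
    field_simp
    ring
  have hint1 : IntervalIntegrable
      (fun y : ℝ => (Complex.exp (cα * R) / cα) * (((R - y : ℝ) : ℂ) * Complex.exp (cδ * y)))
      volume 0 R := by
    apply Continuous.intervalIntegrable
    apply Continuous.mul continuous_const
    fun_prop
  have hint2 : IntervalIntegrable
      (fun y : ℝ => (Complex.exp (cα * R) / cα ^ 2) * Complex.exp (cδ * y)) volume 0 R := by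
    apply Continuous.intervalIntegrable; fun_prop
  rw [step1, intervalIntegral.integral_add (hint1.sub hint2) intervalIntegrable_const,
    intervalIntegral.integral_sub hint1 hint2, intervalIntegral.integral_const_mul,
    intervalIntegral.integral_const_mul, intervalIntegral.integral_const]
  set q := lam / |a| with hq
  have hqpos : 0 < q := div_pos hlam (abs_pos.mpr ha)
  have hq1 : q ≤ 1 := (div_le_one (abs_pos.mpr ha)).mpr hlam2
  have habs1 : Complex.abs (Complex.exp (cα * R) / cα) = q := by
    rw [map_div₀, sfc_exp_abs, sfQbounds hlam ha, hq, one_div_div]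
  have habs2 : Complex.abs (Complex.exp (cα * R) / cα ^ 2) = q ^ 2 := by
    rw [map_div₀, sfc_exp_abs, map_pow, sfQbounds hlam ha, hq, div_pow, one_div, ← one_div]
    field_simp
  have habs3 : Complex.abs ((1:ℂ) / cα ^ 2) = q ^ 2 := by
    rw [map_div₀, map_one, map_pow, sfQbounds hlam ha, hq, div_pow, one_div, ← one_div]
    field_simp
  have hJ0 : Complex.abs (∫ y in (0:ℝ)..R, Complex.exp (cδ * y)) ≤ 2 * q := by
    refine le_trans (sfJ0_abs hα' R) ?_
    rw [show -a / lam = -(a / lam) by ring, abs_neg, abs_div, abs_of_pos hlam, hq,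
      div_div_eq_mul_div, mul_div_assoc]
  have hJ1 : Complex.abs (∫ y in (0:ℝ)..R, ((R - y : ℝ) : ℂ) * Complex.exp (cδ * y))
      ≤ 2 * q ^ 2 + R * q := by
    refine le_trans (sfJ1_abs hα' hR0) ?_
    have e2 : 2 / (-a / lam) ^ 2 = 2 * q ^ 2 := by
      rw [show -a / lam = -(a / lam) by ring, neg_sq, hq, div_pow, div_pow, sq_abs,
        div_div_eq_mul_div, mul_div_assoc]
    have e3 : R / |(-a) / lam| = R * q := by
      rw [show -a / lam = -(a / lam) by ring, abs_neg, abs_div, abs_of_pos hlam, hq,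
        div_div_eq_mul_div, mul_div_assoc]
    rw [e2, e3]
  set X := ∫ y in (0:ℝ)..R, Complex.exp (cδ * y) with hX
  set Y := ∫ y in (0:ℝ)..R, ((R - y : ℝ) : ℂ) * Complex.exp (cδ * y) with hY
  calc Complex.abs ((Complex.exp (cα * R) / cα) * Y - (Complex.exp (cα * R) / cα ^ 2) * X
          + (R - 0) • (1 / cα ^ 2 : ℂ))
      ≤ Complex.abs ((Complex.exp (cα * R) / cα) * Y)
          + Complex.abs ((Complex.exp (cα * R) / cα ^ 2) * X)
          + Complex.abs ((R - 0) • (1 / cα ^ 2 : ℂ)) := by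
        refine le_trans (AbsoluteValue.add_le _ _ _) ?_
        gcongr
        exact AbsoluteValue.sub_le_add _ _ _
    _ ≤ q * (2 * q ^ 2 + R * q) + q ^ 2 * (2 * q) + R * q ^ 2 := by
        rw [map_mul, map_mul, habs1, habs2]
        have h4 : Complex.abs ((R - 0) • (1 / cα ^ 2 : ℂ)) = R * q ^ 2 := by
          rw [sub_zero, Complex.real_smul, map_mul, Complex.abs_ofReal, abs_of_nonneg hR0, habs3]
        rw [h4]
        gcongr
    _ ≤ 6 * q ^ 2 := by nlinarith
    _ = (6 / a ^ 2) * lam ^ 2 := by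
        rw [hq, div_pow, sq_abs]
        field_simp

lemma sfK3_bound {lam a : ℝ} (hlam : 0 < lam) (ha : a ≠ 0) (hlam2 : lam ≤ |a|)
    (s : Fin 3 → ℝ)
    (harr : (s 0 = a ∧ s 1 = a ∧ s 2 = 0) ∨ (s 0 = a ∧ s 1 = 0 ∧ s 2 = a)
      ∨ (s 0 = 0 ∧ s 1 = a ∧ s 2 = a))
    {R : ℝ} (hR0 : 0 ≤ R) (hR1 : R ≤ 1) :
    Complex.abs (sfK lam 3 s R) ≤ (6 / a ^ 2) * lam ^ 2 := by
  rcases harr with ⟨h0, h1, h2⟩ | ⟨h0, h1, h2⟩ | ⟨h0, h1, h2⟩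
  · exact sfK3_a_mix hlam ha hlam2 s h0
      (Or.inl ⟨by rw [sfTail3a]; exact h1, by rw [sfTail3b]; exact h2⟩) hR0 hR1
  · exact sfK3_a_mix hlam ha hlam2 s h0
      (Or.inr ⟨by rw [sfTail3a]; exact h1, by rw [sfTail3b]; exact h2⟩) hR0 hR1
  · exact sfK3_0_aa hlam ha hlam2 s h0 h1 h2 hR0 hR1

lemma sfCApos {a b : ℝ} (ha : a ≠ 0) (hb : b ≠ 0) (hab : a ≠ b) :
    0 < 2 / (|a| * |b|) + 2 / (|a| * |a - b|) + 2 / (|b| * |a - b|) := by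
  have h1 : 0 < |a| := abs_pos.mpr ha
  have h2 : 0 < |b| := abs_pos.mpr hb
  have h3 : 0 < |a - b| := abs_pos.mpr (sub_ne_zero.mpr hab)
  positivity

lemma sfDescentA {lam a b : ℝ} (hlam : 0 < lam) (ha : a ≠ 0) (hb : b ≠ 0) (hab : a ≠ b) :
    ∀ n, 2 ≤ n → ∀ s : Fin n → ℝ, (∃ j k : Fin n, j ≠ k ∧ s j = a ∧ s k = b) →
    ∀ R : ℝ, 0 ≤ R → R ≤ 1 → Complex.abs (sfK lam n s R)
      ≤ (2 / (|a| * |b|) + 2 / (|a| * |a - b|) + 2 / (|b| * |a - b|)) * lam ^ 2 := by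
  have h1 : 0 < |a| := abs_pos.mpr ha
  have h2 : 0 < |b| := abs_pos.mpr hb
  have h3 : 0 < |a - b| := abs_pos.mpr (sub_ne_zero.mpr hab)
  intro n hn
  induction n, hn using Nat.le_induction with
  | base =>
    rintro s ⟨j, k, hjk, hj, hk⟩ R hR0 hR1
    fin_cases j <;> fin_cases k
    · exact absurd rfl hjk
    · refine le_trans (sfBaseA hlam ha hb hab s hj hk hR0 hR1) ?_
      have e : |b| * |a| = |a| * |b| := mul_comm _ _
      have h4 : 0 < 2 / (|a| * |a - b|) := by positivity
      rw [e]
      nlinarith [sq_nonneg lam]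
    · refine le_trans (sfBaseA hlam hb ha (Ne.symm hab) s hk hj hR0 hR1) ?_
      have e : |b - a| = |a - b| := abs_sub_comm b a
      rw [e]
      have h4 : 0 < 2 / (|b| * |a - b|) := by positivity
      nlinarith [sq_nonneg lam]
    · exact absurd rfl hjk
  | succ n hn ih =>
    rintro s ⟨j, k, hjk, hj, hk⟩ R hR0 hR1
    have hpivot : ∃ p : Fin (n + 1), p ≠ j ∧ p ≠ k := by
      by_contra h
      push_neg at h
      have hsub : (Finset.univ : Finset (Fin (n + 1))) ⊆ {j, k} := by
        intro p _
        rcases eq_or_ne p j with rfl | hpj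
        · simp
        · simp [h p hpj]
      have hle := Finset.card_le_card hsub
      have h2' : ({j, k} : Finset (Fin (n + 1))).card ≤ 2 :=
        le_trans (Finset.card_insert_le _ _) (by simp)
      simp only [Finset.card_univ, Fintype.card_fin] at hle
      omega
    obtain ⟨p, hpj, hpk⟩ := hpivot
    obtain ⟨j', hj'⟩ := Fin.exists_succAbove_eq (Ne.symm hpj)
    obtain ⟨k', hk'⟩ := Fin.exists_succAbove_eq (Ne.symm hpk)
    have hne : j' ≠ k' := fun h => hjk (by rw [← hj', ← hk', h])
    refine sfProp lam s p (by positivity)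
      (fun R' hR0' hR1' => ih (s ∘ p.succAbove) ⟨j', k', hne, ?_, ?_⟩ R' hR0' hR1') R hR0 hR1
    · show s (p.succAbove j') = a; rw [hj']; exact hj
    · show s (p.succAbove k') = b; rw [hk']; exact hk

lemma sfDescentB {lam a : ℝ} (hlam : 0 < lam) (ha : a ≠ 0) (hlam2 : lam ≤ |a|) :
    ∀ n, 3 ≤ n → ∀ s : Fin n → ℝ,
    (∃ j k m : Fin n, j ≠ k ∧ j ≠ m ∧ k ≠ m ∧ s j = a ∧ s k = a ∧ s m = 0) →
    ∀ R : ℝ, 0 ≤ R → R ≤ 1 →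
      Complex.abs (sfK lam n s R) ≤ (6 / a ^ 2) * lam ^ 2 := by
  intro n hn
  induction n, hn using Nat.le_induction with
  | base =>
    rintro s ⟨j, k, m, hjk, hjm, hkm, hj, hk, hm⟩ R hR0 hR1
    refine sfK3_bound hlam ha hlam2 s ?_ hR0 hR1
    fin_cases j <;> fin_cases k <;> fin_cases m <;> simp_all <;> tauto
  | succ n hn ih =>
    rintro s ⟨j, k, m, hjk, hjm, hkm, hj, hk, hm⟩ R hR0 hR1
    have hpivot : ∃ p : Fin (n + 1), p ≠ j ∧ p ≠ k ∧ p ≠ m := by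
      by_contra h
      push_neg at h
      have hsub : (Finset.univ : Finset (Fin (n + 1))) ⊆ {j, k, m} := by
        intro p _
        rcases eq_or_ne p j with rfl | hpj
        · simp
        · rcases eq_or_ne p k with rfl | hpk
          · simp
          · simp [h p hpj hpk]
      have hle := Finset.card_le_card hsub
      have h3' : ({j, k, m} : Finset (Fin (n + 1))).card ≤ 3 :=
        Finset.card_le_three
      simp only [Finset.card_univ, Fintype.card_fin] at hle
      omega
    obtain ⟨p, hpj, hpk, hpm⟩ := hpivot
    obtain ⟨j', hj'⟩ := Fin.exists_succAbove_eq (Ne.symm hpj)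
    obtain ⟨k', hk'⟩ := Fin.exists_succAbove_eq (Ne.symm hpk)
    obtain ⟨m', hm'⟩ := Fin.exists_succAbove_eq (Ne.symm hpm)
    have hne1 : j' ≠ k' := fun h => hjk (by rw [← hj', ← hk', h])
    have hne2 : j' ≠ m' := fun h => hjm (by rw [← hj', ← hm', h])
    have hne3 : k' ≠ m' := fun h => hkm (by rw [← hk', ← hm', h])
    refine sfProp lam s p (by positivity)
      (fun R' hR0' hR1' => ih (s ∘ p.succAbove)
        ⟨j', k', m', hne1, hne2, hne3, ?_, ?_, ?_⟩ R' hR0' hR1') R hR0 hR1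
    · show s (p.succAbove j') = a; rw [hj']; exact hj
    · show s (p.succAbove k') = a; rw [hk']; exact hk
    · show s (p.succAbove m') = 0; rw [hm']; exact hm

end

open MeasureTheory

/-- If `s ≠ 0` is neither a scalar multiple of a standard unit vector nor of the
all-ones vector, then the Fourier transform of the unit simplex is `O(λ²)` as `λ → 0⁺`. -/
theorem stmt_5 (n : ℕ) (hn : 2 ≤ n) (s : Fin n → ℝ) (hs : s ≠ 0)
    (h1 : ∀ (c : ℝ) (j : Fin n), s ≠ c • (fun i => if i = j then (1:ℝ) else 0))
    (h2 : ∀ c : ℝ, s ≠ fun _ => c) :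
    ∃ C > (0:ℝ), ∃ lam0 > (0:ℝ), ∀ lam : ℝ, 0 < lam → lam < lam0 →
      ‖(∫ x in {x : Fin n → ℝ | (∑ i, x i) ≤ 1 ∧ ∀ i, 0 ≤ x i},
          Complex.exp (-Complex.I * (((∑ i, s i * x i) / lam : ℝ) : ℂ)))‖ ≤
        C * lam ^ 2 := by
  by_cases hA : ∃ j k : Fin n, j ≠ k ∧ s j ≠ 0 ∧ s k ≠ 0 ∧ s j ≠ s k
  · obtain ⟨j, k, hjk, hj, hk, hne⟩ := hA
    refine ⟨2 / (|s j| * |s k|) + 2 / (|s j| * |s j - s k|) + 2 / (|s k| * |s j - s k|),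
      sfCApos hj hk hne, 1, one_pos, fun lam hl0 _ => ?_⟩
    have hmain := sfDescentA hl0 hj hk hne n hn s ⟨j, k, hjk, rfl, rfl⟩ 1 zero_le_one le_rfl
    exact hmain
  · push_neg at hA
    obtain ⟨j0, hj0⟩ : ∃ j0, s j0 ≠ 0 := by
      by_contra h
      push_neg at h
      exact hs (funext fun i => h i)
    have hval : ∀ i, s i = s j0 ∨ s i = 0 := by
      intro i
      by_cases h : s i = 0
      · exact Or.inr h
      · rcases eq_or_ne i j0 with rfl | hne
        · exact Or.inl rfl
        · exact Or.inl (hA i j0 hne h hj0)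
    obtain ⟨k0, hk0⟩ : ∃ k0, s k0 = 0 := by
      by_contra h
      push_neg at h
      exact h2 (s j0) (funext fun i => (hval i).resolve_right (h i))
    have hk0j0 : k0 ≠ j0 := fun h => hj0 (h ▸ hk0)
    obtain ⟨m0, hm0j0, hm0⟩ : ∃ m0, m0 ≠ j0 ∧ s m0 = s j0 := by
      by_contra h
      push_neg at h
      refine absurd (funext fun i => ?_) (h1 (s j0) j0)
      rcases eq_or_ne i j0 with rfl | hne
      · simp
      · have hz : s i = 0 := (hval i).resolve_left (h i hne)
        simp [hz, hne]
    have hm0k0 : m0 ≠ k0 := fun h => hj0 (by rw [← hm0, h, hk0])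
    have hn3 : 3 ≤ n := by
      have hnotmem : j0 ∉ ({k0, m0} : Finset (Fin n)) := by
        simp only [Finset.mem_insert, Finset.mem_singleton]
        rintro (h | h)
        · exact hk0j0 h.symm
        · exact hm0j0 h.symm
      have hcard : ({j0, k0, m0} : Finset (Fin n)).card = 3 := by
        rw [Finset.card_insert_of_notMem hnotmem, Finset.card_pair (Ne.symm hm0k0)]
      have hle : ({j0, k0, m0} : Finset (Fin n)).card ≤ n := by
        refine le_trans (Finset.card_le_univ _) ?_
        simp
      omega
    have hsq : (0:ℝ) < (s j0) ^ 2 :=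
      lt_of_le_of_ne (sq_nonneg _) (Ne.symm (pow_ne_zero 2 hj0))
    refine ⟨6 / (s j0) ^ 2, by positivity, min 1 |s j0|,
      lt_min one_pos (abs_pos.mpr hj0), fun lam hl0 hl1 => ?_⟩
    have hlam2 : lam ≤ |s j0| := le_of_lt (lt_of_lt_of_le hl1 (min_le_right _ _))
    have hmain := sfDescentB hl0 hj0 hlam2 n hn3 s
      ⟨j0, m0, k0, Ne.symm hm0j0, Ne.symm hk0j0, hm0k0, rfl, hm0, hk0⟩ 1 zero_le_one le_rfl
    exact hmain
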